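/- Let A ⊆ ℝ^d be a Lebesgue measurable set of positive measure and let F = {v¹, …, v^k} ⊆ ℝ^d be a finite set. Then there exists ε > 0 such that the open interval (0, ε) is contained in Δ_F(A) = {t ∈ ℝ : ∃ z ∈ ℝ^d such that t·vⁱ + z ∈ A for all i = 1, …, k}; that is, A contains all sufficiently small scaled translates of F. -/

import Mathlib

open Set MeasureTheory Filter
open scoped ENNReal symmDiff Topology

/-- Steinhaus-type theorem for finite configurations: if `A ⊆ ℝ^d` has positive
Lebesgue measure and `F = {v 1, …, v k}` is finite, then `A` contains all
sufficiently small scaled translates of `F`; i.e. `(0, ε) ⊆ Δ_F(A)` for some `ε > 0`. -/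
theorem finite_configurations_in_positive_measure
    (d k : ℕ) (A : Set (EuclideanSpace ℝ (Fin d)))
    (hA_meas : MeasurableSet A) (hA_pos : 0 < volume A)
    (v : Fin k → EuclideanSpace ℝ (Fin d)) :
    ∃ ε : ℝ, 0 < ε ∧
      Set.Ioo 0 ε ⊆
        {t : ℝ | ∃ z : EuclideanSpace ℝ (Fin d), ∀ i : Fin k, t • v i + z ∈ A} := by
  classical
  rcases Nat.eq_zero_or_pos k with hk | hk
  · subst hk
    exact ⟨1, one_pos, fun t _ => ⟨0, fun i => i.elim0⟩⟩
  -- restrict A to a finite-measure positive piece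
  obtain ⟨R, hR⟩ : ∃ R : ℕ, 0 < volume (A ∩ Metric.closedBall 0 R) := by
    by_contra h
    push_neg at h
    have h0 : ∀ n : ℕ, volume (A ∩ Metric.closedBall 0 n) = 0 := fun n =>
      le_antisymm (h n) zero_le
    have hsub : A ⊆ ⋃ n : ℕ, A ∩ Metric.closedBall 0 n := by
      intro x hx
      obtain ⟨n, hn⟩ := exists_nat_ge ‖x‖
      exact mem_iUnion.2 ⟨n, hx, by simpa [Metric.mem_closedBall, dist_eq_norm] using hn⟩
    have hle : volume A ≤ ∑' n : ℕ, volume (A ∩ Metric.closedBall 0 n) :=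
      (measure_mono hsub).trans (measure_iUnion_le _)
    simp [h0] at hle
    exact absurd hle hA_pos.ne'
  set A' : Set (EuclideanSpace ℝ (Fin d)) := A ∩ Metric.closedBall 0 R with hA'
  have hA'meas : MeasurableSet A' := hA_meas.inter measurableSet_closedBall
  have hA'fin : volume A' ≠ ⊤ :=
    (lt_of_le_of_lt (measure_mono inter_subset_right)
      (MeasureTheory.measure_closedBall_lt_top)).ne
  set m : ℝ≥0∞ := volume A' with hm
  have hm0 : m ≠ 0 := hR.ne'
  set c : ℝ≥0∞ := m / (k + 1) with hc
  have hnt : ((k : ℝ≥0∞) + 1) ≠ ⊤ :=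
    (ENNReal.add_lt_top.2 ⟨ENNReal.natCast_lt_top k, ENNReal.one_lt_top⟩).ne
  have hne1 : ((k : ℝ≥0∞) + 1) ≠ 0 := by simp
  have hc0 : c ≠ 0 := by
    simp only [hc, ne_eq, ENNReal.div_eq_zero_iff, hm0, false_or]
    exact hnt
  have hkc : (k : ℝ≥0∞) * c < m := by
    have hcne : c ≠ ⊤ := (ENNReal.div_lt_top hA'fin hne1).ne
    calc (k : ℝ≥0∞) * c < ((k : ℝ≥0∞) + 1) * c :=
          ENNReal.mul_lt_mul_left hc0 hcne (ENNReal.lt_add_right (ENNReal.natCast_lt_top k).ne one_ne_zero)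
      _ = m := by rw [hc, ENNReal.mul_div_cancel hne1 hnt]
  -- the translation family
  have hFi : ∀ i : Fin k, Continuous fun p : ℝ × EuclideanSpace ℝ (Fin d) => p.2 + p.1 • v i := by
    intro i; fun_prop
  set f : Fin k → C(ℝ, C(EuclideanSpace ℝ (Fin d), EuclideanSpace ℝ (Fin d))) := fun i =>
    ContinuousMap.curry ⟨fun p : ℝ × EuclideanSpace ℝ (Fin d) => p.2 + p.1 • v i, hFi i⟩ with hf
  have hfmp : ∀ (i : Fin k) (t : ℝ), MeasurePreserving (f i t) volume volume := by
    intro i t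
    have h1 : ⇑(f i t) = fun z : EuclideanSpace ℝ (Fin d) => z + t • v i := rfl
    rw [h1]
    exact measurePreserving_add_right volume (t • v i)
  have hg0 : ∀ i : Fin k, (f i 0) ⁻¹' A' = A' := by
    intro i
    have h1 : ⇑(f i 0) = id := funext fun z => by
      show z + (0:ℝ) • v i = z; simp
    rw [h1]; rfl
  have hten : ∀ i : Fin k,
      Tendsto (fun t => volume (((f i t) ⁻¹' A') ∆ ((f i 0) ⁻¹' A'))) (𝓝 0) (𝓝 0) := fun i =>
    tendsto_measure_symmDiff_preimage_nhds_zero ((f i).continuous.tendsto 0)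
      (.of_forall (hfmp i)) (hfmp i 0) hA'meas.nullMeasurableSet hA'fin
  have hev : ∀ᶠ t : ℝ in 𝓝 0, ∀ i : Fin k,
      volume (((f i t) ⁻¹' A') ∆ A') < c := by
    rw [eventually_all]
    intro i
    have := (hten i).eventually_lt_const hc0.bot_lt
    simpa [hg0 i] using this
  -- key step: such t are in the configuration set
  have key : ∀ t : ℝ, (∀ i : Fin k, volume (((f i t) ⁻¹' A') ∆ A') < c) →
      ∃ z : EuclideanSpace ℝ (Fin d), ∀ i : Fin k, t • v i + z ∈ A := by
    intro t ht
    have hnonempty : (A' ∩ ⋂ i : Fin k, (f i t) ⁻¹' A').Nonempty := by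
      by_contra hcon
      rw [not_nonempty_iff_eq_empty, eq_empty_iff_forall_notMem] at hcon
      have hsub : A' ⊆ ⋃ i : Fin k, A' \ (f i t) ⁻¹' A' := by
        intro x hx
        have hx' : x ∉ ⋂ i : Fin k, (f i t) ⁻¹' A' := fun h => hcon x ⟨hx, h⟩
        rw [mem_iInter] at hx'
        push_neg at hx'
        obtain ⟨i, hi⟩ := hx'
        exact mem_iUnion.2 ⟨i, hx, hi⟩
      have h1 : m ≤ ∑ i : Fin k, volume (A' \ (f i t) ⁻¹' A') :=
        (measure_mono hsub).trans (measure_iUnion_fintype_le volume _)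
      have h2 : ∑ i : Fin k, volume (A' \ (f i t) ⁻¹' A') ≤ ∑ _i : Fin k, c :=
        Finset.sum_le_sum fun i _ => by
          refine le_of_lt ((measure_mono ?_).trans_lt (ht i))
          rw [Set.symmDiff_def]
          exact subset_union_right
      have h3 : ∑ _i : Fin k, c = (k : ℝ≥0∞) * c := by
        simp [Finset.sum_const, nsmul_eq_mul]
      exact absurd ((h1.trans h2).trans_eq h3) hkc.not_ge
    obtain ⟨z, hzA', hzT⟩ := hnonempty
    refine ⟨z, fun i => ?_⟩
    have h4 : z + t • v i ∈ A' := mem_iInter.1 hzT i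
    rw [hA'] at h4
    rw [add_comm]
    exact h4.1
  obtain ⟨ε, hε, hball⟩ := Metric.eventually_nhds_iff.mp hev
  refine ⟨ε, hε, fun t ht => ?_⟩
  have hd : dist t 0 < ε := by
    rw [Real.dist_0_eq_abs, abs_of_pos ht.1]
    exact ht.2
  exact key t (hball hd)
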